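/- For every prime p \ge 3, B_{p-1} - 1 \equiv S_{p-1} \pmod{p}, where B_n are the Bell numbers and S_n the derangement numbers. -/

import Mathlib

/-- The Bell numbers: `B₀ = 1` and `B_{n+1} = ∑_{k=0}^{n} C(n,k)·B_k`. -/
def bell : ℕ → ℕ
  | 0 => 1
  | n + 1 => ∑ k ∈ (Finset.range (n + 1)).attach,
      n.choose k.val * bell k.val
decreasing_by exact Finset.mem_range.mp k.2

open Finset
def stir : ℕ → ℕ → ℕ
  | 0, 0 => 1
  | 0, _ + 1 => 0
  | _ + 1, 0 => 0
  | n + 1, k + 1 => (k + 1) * stir n (k + 1) + stir n k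
lemma stir_zero_succ (k : ℕ) : stir 0 (k + 1) = 0 := rfl
lemma stir_succ_zero (n : ℕ) : stir (n + 1) 0 = 0 := rfl
lemma stir_succ_succ (n k : ℕ) :
    stir (n + 1) (k + 1) = (k + 1) * stir n (k + 1) + stir n k := rfl
lemma stir_eq_zero : ∀ n k, n < k → stir n k = 0
  | 0, _ + 1, _ => rfl
  | n + 1, k + 1, h => by
    rw [stir_succ_succ, stir_eq_zero n (k + 1) (by omega), stir_eq_zero n k (by omega)]; ring
lemma stir_one : ∀ n, stir (n + 1) 1 = 1
  | 0 => rfl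
  | n + 1 => by
    have : stir (n + 1 + 1) 1 = 1 * stir (n + 1) 1 + stir (n + 1) 0 := rfl
    rw [this, stir_one n, stir_succ_zero]

lemma stir_succ_eq (n : ℕ) :
    ∀ k, stir (n + 1) (k + 1) = ∑ j ∈ range (n + 1), n.choose j * stir j k := by
  induction n with
  | zero =>
      intro k
      cases k with
      | zero => simp [stir_succ_succ, stir_zero_succ]
      | succ m => simp [stir_succ_succ, stir_zero_succ]
  | succ n ih =>
      intro k
      cases k with
      | zero =>
          rw [stir_succ_succ, stir_one, stir_succ_zero]
          rw [Finset.sum_eq_single 0]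
          · show 1 = Nat.choose (n+1) 0 * stir 0 0
            rfl
          · intro b _ hb
            obtain ⟨c, rfl⟩ := Nat.exists_eq_succ_of_ne_zero hb
            rw [stir_succ_zero, mul_zero]
          · intro h; exact absurd (Finset.mem_range.mpr (by omega)) h
      | succ m =>
          rw [stir_succ_succ, ih (m + 1), ih m]
          rw [Finset.sum_range_succ' (fun j => (n + 1).choose j * stir j (m + 1)) (n + 1)]
          have h1 : ∀ i ∈ range (n + 1),
              (n + 1).choose (i + 1) * stir (i + 1) (m + 1)
              = ((m + 1) * (n.choose i * stir i (m + 1)) + n.choose i * stir i m)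
                + n.choose (i + 1) * stir (i + 1) (m + 1) := by
            intro i _
            rw [Nat.choose_succ_succ, stir_succ_succ]
            ring
          rw [Finset.sum_congr rfl h1, Finset.sum_add_distrib, Finset.sum_add_distrib]
          have h2 : ∑ i ∈ range (n + 1), n.choose (i + 1) * stir (i + 1) (m + 1)
              = ∑ j ∈ range (n + 1), n.choose j * stir j (m + 1) := by
            rw [Finset.sum_range_succ (fun i => n.choose (i + 1) * stir (i + 1) (m + 1)) n,
              Finset.sum_range_succ' (fun j => n.choose j * stir j (m + 1)) n]
            simp [stir_zero_succ, Nat.choose_succ_self]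
          rw [h2, ← Finset.mul_sum, stir_zero_succ]
          ring


lemma bell_succ (n : ℕ) : bell (n + 1) = ∑ j ∈ range (n + 1), n.choose j * bell j := by
  rw [bell]; exact Finset.sum_attach (range (n+1)) (fun j => n.choose j * bell j)

lemma bell_eq : ∀ n, bell n = ∑ k ∈ range (n + 1), stir n k := by
  intro n
  induction n using Nat.strong_induction_on with
  | _ n ih =>
    match n with
    | 0 => simp [bell]; rfl
    | n + 1 =>
      rw [bell_succ]
      have h1 : ∀ j ∈ range (n + 1),
          n.choose j * bell j = ∑ k ∈ range (n + 1), n.choose j * stir j k := by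
        intro j hj
        have hj' := Finset.mem_range.mp hj
        rw [ih j (by omega), Finset.mul_sum]
        apply Finset.sum_subset
        · exact Finset.range_subset_range.mpr (by omega)
        · intro k _ hk
          rw [stir_eq_zero j k (by simpa using hk), mul_zero]
      rw [Finset.sum_congr rfl h1, Finset.sum_comm]
      rw [Finset.sum_range_succ' (fun k => stir (n + 1) k) (n + 1), stir_succ_zero, add_zero]
      exact Finset.sum_congr rfl (fun k _ => (stir_succ_eq n k).symm)

/-- `U n k = ∑_{j=0}^{k} (-1)^j C(k,j) j^n` over the integers. -/
def U (n k : ℕ) : ℤ := ∑ j ∈ range (k + 1), (-1) ^ j * (k.choose j : ℤ) * (j : ℤ) ^ n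

lemma U_sub (n k : ℕ) :
    U n (k + 1) = U n k
      - ∑ i ∈ range (k + 1), (-1 : ℤ) ^ i * (k.choose i : ℤ) * ((i : ℤ) + 1) ^ n := by
  unfold U
  rw [Finset.sum_range_succ'
    (fun j => ((-1 : ℤ)) ^ j * ((k + 1).choose j : ℤ) * (j : ℤ) ^ n) (k + 1)]
  rw [Finset.sum_range_succ' (fun j => ((-1 : ℤ)) ^ j * (k.choose j : ℤ) * (j : ℤ) ^ n) k]
  have h1 : ∀ i ∈ range (k + 1),
      (-1 : ℤ) ^ (i + 1) * ((k + 1).choose (i + 1) : ℤ) * ((i : ℤ) + 1) ^ n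
      = (-1) ^ (i + 1) * (k.choose i : ℤ) * ((i : ℤ) + 1) ^ n
        + (-1) ^ (i + 1) * (k.choose (i + 1) : ℤ) * ((i : ℤ) + 1) ^ n := by
    intro i _
    rw [Nat.choose_succ_succ]
    push_cast
    ring
  have h2 : ∑ i ∈ range (k + 1),
      ((-1 : ℤ)) ^ (i + 1) * ((k + 1).choose (i + 1) : ℤ) * (((i : ℕ) + 1 : ℕ) : ℤ) ^ n
      = ∑ i ∈ range (k + 1),
        ((-1) ^ (i + 1) * (k.choose i : ℤ) * ((i : ℤ) + 1) ^ n
          + (-1) ^ (i + 1) * (k.choose (i + 1) : ℤ) * ((i : ℤ) + 1) ^ n) := by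
    refine Finset.sum_congr rfl fun i hi => ?_
    push_cast
    exact h1 i hi
  rw [h2, Finset.sum_add_distrib]
  have h3 : ∑ i ∈ range (k + 1), (-1 : ℤ) ^ (i + 1) * (k.choose (i + 1) : ℤ) * ((i : ℤ) + 1) ^ n
      = ∑ i ∈ range k,
        (-1 : ℤ) ^ (i + 1) * (k.choose (i + 1) : ℤ) * (((i : ℕ) + 1 : ℕ) : ℤ) ^ n := by
    rw [Finset.sum_range_succ]
    simp [Nat.choose_succ_self]
  have h4 : ∑ i ∈ range (k + 1), (-1 : ℤ) ^ (i + 1) * (k.choose i : ℤ) * ((i : ℤ) + 1) ^ n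
      = - ∑ i ∈ range (k + 1), (-1 : ℤ) ^ i * (k.choose i : ℤ) * ((i : ℤ) + 1) ^ n := by
    rw [← Finset.sum_neg_distrib]
    exact Finset.sum_congr rfl fun i _ => by ring
  rw [h3, h4]
  simp only [Nat.choose_zero_right, Nat.cast_one]
  ring

lemma U_succ_succ (n k : ℕ) :
    U (n + 1) (k + 1) = ((k : ℤ) + 1) * (U n (k + 1) - U n k) := by
  rw [U_sub n k, U]
  rw [Finset.sum_range_succ'
    (fun j => ((-1 : ℤ)) ^ j * ((k + 1).choose j : ℤ) * (j : ℤ) ^ (n + 1)) (k + 1)]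
  have h1 : ∀ i ∈ range (k + 1),
      (-1 : ℤ) ^ (i + 1) * ((k + 1).choose (i + 1) : ℤ) * (((i : ℕ) + 1 : ℕ) : ℤ) ^ (n + 1)
      = ((k : ℤ) + 1) * (-((-1) ^ i * (k.choose i : ℤ) * ((i : ℤ) + 1) ^ n)) := by
    intro i _
    have hc : ((k : ℤ) + 1) * (k.choose i : ℤ)
        = ((k + 1).choose (i + 1) : ℤ) * ((i : ℤ) + 1) := by
      have := Nat.add_one_mul_choose_eq k i
      exact_mod_cast congrArg (fun x : ℕ => (x : ℤ)) this
    push_cast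
    calc (-1 : ℤ) ^ (i + 1) * ((k + 1).choose (i + 1) : ℤ) * ((i : ℤ) + 1) ^ (n + 1)
        = (-1) ^ (i + 1) * (((k + 1).choose (i + 1) : ℤ) * ((i : ℤ) + 1)) * ((i : ℤ) + 1) ^ n := by
          ring
      _ = (-1) ^ (i + 1) * (((k : ℤ) + 1) * (k.choose i : ℤ)) * ((i : ℤ) + 1) ^ n := by
          rw [hc]
      _ = ((k : ℤ) + 1) * (-((-1) ^ i * (k.choose i : ℤ) * ((i : ℤ) + 1) ^ n)) := by ring
  rw [Finset.sum_congr rfl h1, ← Finset.mul_sum, Finset.sum_neg_distrib]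
  simp only [Nat.cast_zero, Nat.choose_zero_right, Nat.cast_one, pow_zero,
    zero_pow (Nat.succ_ne_zero n), one_mul, mul_zero, add_zero]
  ring

lemma stir_formula : ∀ n k, ((-1 : ℤ) ^ k * (k.factorial : ℤ) * (stir n k : ℤ)) = U n k := by
  intro n
  induction n with
  | zero =>
      intro k
      cases k with
      | zero => simp [U]; rfl
      | succ m =>
          rw [stir_zero_succ, U]
          have h : ∀ j ∈ range (m + 2),
              (-1 : ℤ) ^ j * ((m + 1).choose j : ℤ) * (j : ℤ) ^ (0 : ℕ)
              = (-1 : ℤ) ^ j * ((m + 1).choose j : ℤ) := by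
            intro j _; rw [pow_zero, mul_one]
          rw [Finset.sum_congr rfl h, Int.alternating_sum_range_choose_of_ne (Nat.succ_ne_zero m)]
          simp
  | succ n ih =>
      intro k
      cases k with
      | zero => simp [stir_succ_zero, U, zero_pow (Nat.succ_ne_zero n)]
      | succ m =>
          rw [U_succ_succ, ← ih (m + 1), ← ih m, stir_succ_succ]
          push_cast [Nat.factorial_succ]
          ring

/-- For every prime `p ≥ 3`, `B_{p-1} - 1 ≡ S_{p-1} (mod p)`. -/
theorem bell_sub_one_eq_derangement_mod (p : ℕ) (hp : p.Prime) (hp3 : 3 ≤ p) :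
    (bell (p - 1) : ℤ) - 1 ≡ (numDerangements (p - 1) : ℤ) [ZMOD (p : ℤ)] := by
  haveI : Fact p.Prime := ⟨hp⟩
  rw [← ZMod.intCast_eq_intCast_iff]
  push_cast
  -- Step 1: the Stirling numbers mod p
  have hstir : ∀ i ∈ range (p - 1), (stir (p - 1) (i + 1) : ZMod p)
      = (-1) ^ i * ((Nat.factorial (i + 1) : ZMod p))⁻¹ := by
    intro i hi
    have hi' : i < p - 1 := Finset.mem_range.mp hi
    have hfz : ((-1 : ZMod p) ^ (i + 1) * ((i + 1).factorial : ZMod p))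
          * (stir (p - 1) (i + 1) : ZMod p)
        = ((U (p - 1) (i + 1) : ℤ) : ZMod p) := by
      rw [← stir_formula (p - 1) (i + 1)]; push_cast; ring
    have hZ : ∑ m ∈ range (i + 1), (-1 : ℤ) ^ (m + 1) * (((i + 1).choose (m + 1) : ℕ) : ℤ)
        = -1 := by
      have h0 := Int.alternating_sum_range_choose_of_ne (Nat.succ_ne_zero i)
      rw [Finset.sum_range_succ'
        (fun j => (-1 : ℤ) ^ j * (((i + 1).choose j : ℕ) : ℤ)) (i + 1)] at h0
      simp only [pow_zero, Nat.choose_zero_right, Nat.cast_one, one_mul] at h0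
      linarith
    have hU : ((U (p - 1) (i + 1) : ℤ) : ZMod p) = -1 := by
      rw [U]
      push_cast
      rw [Finset.sum_range_succ'
        (fun j => ((-1 : ZMod p)) ^ j * (((i + 1).choose j : ℕ) : ZMod p)
          * ((j : ℕ) : ZMod p) ^ (p - 1)) (i + 1)]
      have hterm : ∀ m ∈ range (i + 1),
          ((-1 : ZMod p)) ^ (m + 1) * (((i + 1).choose (m + 1) : ℕ) : ZMod p)
            * (((m : ℕ) + 1 : ℕ) : ZMod p) ^ (p - 1)
          = ((-1 : ZMod p)) ^ (m + 1) * (((i + 1).choose (m + 1) : ℕ) : ZMod p) := by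
        intro m hm
        have hm' : m < i + 1 := Finset.mem_range.mp hm
        have hne : (((m : ℕ) + 1 : ℕ) : ZMod p) ≠ 0 := by
          rw [Ne, ZMod.natCast_eq_zero_iff]
          intro hdvd
          have := Nat.le_of_dvd (by omega) hdvd
          omega
        rw [ZMod.pow_card_sub_one_eq_one hne, mul_one]
      rw [Finset.sum_congr rfl hterm]
      have h0 : ((0 : ℕ) : ZMod p) ^ (p - 1) = 0 := by
        rw [Nat.cast_zero, zero_pow (by omega : p - 1 ≠ 0)]
      rw [h0, mul_zero, add_zero]
      calc ∑ m ∈ range (i + 1),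
          ((-1 : ZMod p)) ^ (m + 1) * (((i + 1).choose (m + 1) : ℕ) : ZMod p)
          = ((∑ m ∈ range (i + 1), (-1 : ℤ) ^ (m + 1)
              * (((i + 1).choose (m + 1) : ℕ) : ℤ) : ℤ) : ZMod p) := by
            push_cast; rfl
        _ = -1 := by rw [hZ]; norm_num
    have hfacne : (((i + 1).factorial : ℕ) : ZMod p) ≠ 0 := by
      rw [Ne, ZMod.natCast_eq_zero_iff]
      intro hdvd
      have := (Nat.Prime.dvd_factorial hp).mp hdvd
      omega
    have hune : ((-1 : ZMod p) ^ (i + 1) * ((i + 1).factorial : ZMod p)) ≠ 0 :=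
      mul_ne_zero (pow_ne_zero _ (neg_ne_zero.mpr one_ne_zero)) hfacne
    have hsign : (-1 : ZMod p) ^ (i + 1) * (-1) ^ i = -1 := by
      rw [← pow_add]
      exact Odd.neg_one_pow ⟨i, by ring⟩
    have h2 : ((-1 : ZMod p) ^ (i + 1) * ((i + 1).factorial : ZMod p))
        * ((-1) ^ i * ((Nat.factorial (i + 1) : ZMod p))⁻¹) = -1 := by
      have hinv : ((i + 1).factorial : ZMod p) * ((Nat.factorial (i + 1) : ZMod p))⁻¹ = 1 :=
        mul_inv_cancel₀ hfacne
      calc ((-1 : ZMod p) ^ (i + 1) * ((i + 1).factorial : ZMod p))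
          * ((-1) ^ i * ((Nat.factorial (i + 1) : ZMod p))⁻¹)
          = ((-1 : ZMod p) ^ (i + 1) * (-1) ^ i)
            * (((i + 1).factorial : ZMod p) * ((Nat.factorial (i + 1) : ZMod p))⁻¹) := by ring
        _ = -1 := by rw [hsign, hinv, mul_one]
    exact mul_left_cancel₀ hune (by rw [hfz, hU, h2])
  -- Step 2: Bell number mod p
  have hbell : (bell (p - 1) : ZMod p)
      = ∑ i ∈ range (p - 1), (-1 : ZMod p) ^ i * ((Nat.factorial (i + 1) : ZMod p))⁻¹ := by
    have hb := bell_eq (p - 1)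
    obtain ⟨m, hm⟩ : ∃ m, p - 1 = m + 1 := ⟨p - 2, by omega⟩
    calc (bell (p - 1) : ZMod p)
        = ((∑ k ∈ range (p - 1 + 1), stir (p - 1) k : ℕ) : ZMod p) := by rw [hb]
      _ = ∑ k ∈ range (p - 1 + 1), ((stir (p - 1) k : ℕ) : ZMod p) := by push_cast; rfl
      _ = (∑ i ∈ range (p - 1), ((stir (p - 1) (i + 1) : ℕ) : ZMod p))
            + ((stir (p - 1) 0 : ℕ) : ZMod p) :=
          Finset.sum_range_succ' (fun k => ((stir (p - 1) k : ℕ) : ZMod p)) (p - 1)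
      _ = ∑ i ∈ range (p - 1), ((stir (p - 1) (i + 1) : ℕ) : ZMod p) := by
          rw [hm, stir_succ_zero]; simp
      _ = ∑ i ∈ range (p - 1), (-1 : ZMod p) ^ i * ((Nat.factorial (i + 1) : ZMod p))⁻¹ :=
          Finset.sum_congr rfl hstir
  -- Step 3: derangement number mod p
  have hasc : ∀ k ∈ range (p - 1 + 1),
      ((Nat.ascFactorial (k + 1) (p - 1 - k) : ℕ) : ZMod p)
      = -((Nat.factorial k : ZMod p))⁻¹ := by
    intro k hk
    have hk' : k ≤ p - 1 := by have := Finset.mem_range.mp hk; omega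
    have hmul : k.factorial * Nat.ascFactorial (k + 1) (p - 1 - k) = (p - 1).factorial := by
      have h := Nat.factorial_mul_ascFactorial k (p - 1 - k)
      rwa [Nat.add_sub_cancel' hk'] at h
    have hc : ((Nat.factorial k : ℕ) : ZMod p)
        * ((Nat.ascFactorial (k + 1) (p - 1 - k) : ℕ) : ZMod p) = -1 := by
      rw [← Nat.cast_mul, hmul, ZMod.wilsons_lemma]
    have hkfne : ((Nat.factorial k : ℕ) : ZMod p) ≠ 0 := by
      rw [Ne, ZMod.natCast_eq_zero_iff]
      intro hdvd
      have := (Nat.Prime.dvd_factorial hp).mp hdvd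
      omega
    have h2 : ((Nat.factorial k : ℕ) : ZMod p) * (-((Nat.factorial k : ZMod p))⁻¹) = -1 := by
      rw [mul_neg, mul_inv_cancel₀ hkfne]
    exact mul_left_cancel₀ hkfne (hc.trans h2.symm)
  have hD : ((numDerangements (p - 1) : ℕ) : ZMod p)
      = (∑ i ∈ range (p - 1), (-1 : ZMod p) ^ i * ((Nat.factorial (i + 1) : ZMod p))⁻¹) - 1 := by
    calc ((numDerangements (p - 1) : ℕ) : ZMod p)
        = (((numDerangements (p - 1) : ℤ)) : ZMod p) := by push_cast; rfl
      _ = ∑ k ∈ range (p - 1 + 1), (-1 : ZMod p) ^ k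
            * ((Nat.ascFactorial (k + 1) (p - 1 - k) : ℕ) : ZMod p) := by
          rw [numDerangements_sum]; push_cast; rfl
      _ = ∑ k ∈ range (p - 1 + 1), (-1 : ZMod p) ^ k * (-((Nat.factorial k : ZMod p))⁻¹) :=
          Finset.sum_congr rfl (fun k hk => by rw [hasc k hk])
      _ = (∑ i ∈ range (p - 1), (-1 : ZMod p) ^ (i + 1) * (-((Nat.factorial (i + 1) : ZMod p))⁻¹))
            + (-1 : ZMod p) ^ 0 * (-((Nat.factorial 0 : ZMod p))⁻¹) :=
          Finset.sum_range_succ'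
            (fun k => (-1 : ZMod p) ^ k * (-((Nat.factorial k : ZMod p))⁻¹)) (p - 1)
      _ = (∑ i ∈ range (p - 1), (-1 : ZMod p) ^ i * ((Nat.factorial (i + 1) : ZMod p))⁻¹) - 1 := by
          rw [Finset.sum_congr rfl (fun i _ => by ring :
            ∀ i ∈ range (p - 1), (-1 : ZMod p) ^ (i + 1) * (-((Nat.factorial (i + 1) : ZMod p))⁻¹)
              = (-1 : ZMod p) ^ i * ((Nat.factorial (i + 1) : ZMod p))⁻¹)]
          simp [Nat.factorial_zero]
          ring
  rw [hbell, hD]
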